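/- arXiv:1207.0302 — 2 statements merged into one kernel-verified Lean document; each statement's English description precedes it below -/
import Mathlib

section
/- Let p_0, p_1 ∈ (0,1) and let c_0, c_1, d_0, d_1 ∈ (0,1) satisfy c_0 + d_1 = 1 and c_1 + d_0 = 1. Let (a_i(n))_{n≥0} and (η_i(n))_{n≥2} be real sequences for i ∈ {0,1}, and for each n ≥ 2 and i ∈ {0,1} let X_{i,n} be a binomial B(n, p_i) random variable. Assume that for all n ≥ 2 and both i ∈ {0,1}: a_i(n) = c_i E[a_i(X_{i,n})] + d_i E[a_{1−i}(n − X_{i,n})] + η_i(n). If there exists α > 0 such that η_i(n) = O(n^{−α}) as n → ∞ for both i ∈ {0,1}, then a_i(n) = O(1) as n → ∞ for both i ∈ {0,1}, i.e. the sequences (a_0(n)) and (a_1(n)) are bounded. -/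
open MeasureTheory ProbabilityTheory Real Filter Topology

noncomputable section

/-- `P(X = k)` for `X` binomial `B(n, q)` distributed. -/
def binomialWeight (n : ℕ) (q : ℝ) (k : ℕ) : ℝ :=
  n.choose k * q ^ k * (1 - q) ^ (n - k)

namespace BinomialTransferAux

open Finset

lemma bw_nonneg {q : ℝ} (h0 : 0 ≤ q) (h1 : q ≤ 1) (n k : ℕ) : 0 ≤ binomialWeight n q k := by
  unfold binomialWeight
  have : (0:ℝ) ≤ 1 - q := by linarith
  positivity

lemma bw_sum (n : ℕ) (q : ℝ) : ∑ k ∈ range (n+1), binomialWeight n q k = 1 := by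
  calc ∑ k ∈ range (n+1), binomialWeight n q k
      = ∑ k ∈ range (n+1), q^k * (1-q)^(n-k) * n.choose k := by
        apply Finset.sum_congr rfl; intro k _; unfold binomialWeight; ring
    _ = (q + (1-q))^n := (add_pow q (1-q) n).symm
    _ = 1 := by norm_num

lemma bw_mean (n : ℕ) (q : ℝ) :
    ∑ k ∈ range (n+1), binomialWeight n q k * k = n * q := by
  cases n with
  | zero => simp [binomialWeight]
  | succ m =>
    rw [Finset.sum_range_succ' (fun k => binomialWeight (m+1) q k * k)]
    simp only [Nat.cast_zero, mul_zero, add_zero]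
    have key : ∀ k ∈ range (m+1), binomialWeight (m+1) q (k+1) * ((k:ℝ)+1)
        = ((m:ℝ)+1) * q * binomialWeight m q k := by
      intro k hk
      simp only [Finset.mem_range] at hk
      unfold binomialWeight
      have h := Nat.add_one_mul_choose_eq m k
      have h' : ((m+1) * m.choose k : ℕ) = ((m+1).choose (k+1) * (k+1) : ℕ) := by
        simpa [Nat.succ_eq_add_one] using h
      have hch : ((m+1).choose (k+1) : ℝ) * ((k:ℝ)+1) = ((m:ℝ)+1) * (m.choose k : ℝ) := by
        have := congrArg (Nat.cast (R := ℝ)) h'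
        push_cast at this
        linarith
      have hsub : m + 1 - (k+1) = m - k := by omega
      rw [hsub]
      calc ((m+1).choose (k+1) : ℝ) * q^(k+1) * (1-q)^(m-k) * ((k:ℝ)+1)
          = (((m+1).choose (k+1) : ℝ) * ((k:ℝ)+1)) * q^(k+1) * (1-q)^(m-k) := by ring
        _ = (((m:ℝ)+1) * (m.choose k : ℝ)) * q^(k+1) * (1-q)^(m-k) := by rw [hch]
        _ = ((m:ℝ)+1) * q * ((m.choose k : ℝ) * q^k * (1-q)^(m-k)) := by ring
    calc ∑ k ∈ range (m+1), binomialWeight (m+1) q (k+1) * ((k+1:ℕ):ℝ)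
        = ∑ k ∈ range (m+1), ((m:ℝ)+1) * q * binomialWeight m q k := by
          apply Finset.sum_congr rfl; intro k hk; push_cast; exact key k hk
      _ = ((m:ℝ)+1) * q * ∑ k ∈ range (m+1), binomialWeight m q k := by rw [Finset.mul_sum]
      _ = ((m:ℝ)+1) * q := by rw [bw_sum]; ring
      _ = ((m+1:ℕ):ℝ) * q := by push_cast; ring

lemma bw_mean' (n : ℕ) (q : ℝ) :
    ∑ k ∈ range (n+1), binomialWeight n q k * ((n - k : ℕ):ℝ) = n * (1 - q) := by
  have h : ∀ k ∈ range (n+1), binomialWeight n q k * ((n - k : ℕ):ℝ)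
      = binomialWeight n q k * n - binomialWeight n q k * k := by
    intro k hk
    simp only [Finset.mem_range] at hk
    have hcast : ((n - k : ℕ):ℝ) = (n:ℝ) - k := by
      have : k ≤ n := by omega
      push_cast [this]; ring
    rw [hcast]; ring
  rw [Finset.sum_congr rfl h, Finset.sum_sub_distrib, ← Finset.sum_mul, bw_sum, bw_mean]
  ring

lemma convexOn_phi {β : ℝ} (hβ : 0 < β) :
    ConvexOn ℝ (Set.Ici (0:ℝ)) (fun x : ℝ => (x+1) ^ (-β)) := by
  constructor
  · exact convex_Ici 0
  · intro x hx y hy s t hs ht hst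
    simp only [smul_eq_mul, Set.mem_Ici] at *
    have hx1 : (0:ℝ) < x + 1 := by linarith
    have hy1 : (0:ℝ) < y + 1 := by linarith
    have hz1 : (0:ℝ) < s*x + t*y + 1 := by nlinarith
    rw [rpow_def_of_pos hx1, rpow_def_of_pos hy1, rpow_def_of_pos hz1]
    have hlog : s * Real.log (x+1) + t * Real.log (y+1) ≤ Real.log (s*x + t*y + 1) := by
      have hconc := strictConcaveOn_log_Ioi.concaveOn
      have h2 := hconc.2 (Set.mem_Ioi.2 hx1) (Set.mem_Ioi.2 hy1) hs ht hst
      simp only [smul_eq_mul] at h2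
      have heq : s * (x+1) + t * (y+1) = s*x + t*y + 1 := by nlinarith [hst]
      rw [heq] at h2
      exact h2
    have hmul : Real.log (s*x+t*y+1) * (-β) ≤
        s * (Real.log (x+1) * (-β)) + t * (Real.log (y+1) * (-β)) := by
      nlinarith [hβ]
    calc Real.exp (Real.log (s*x+t*y+1) * (-β))
        ≤ Real.exp (s * (Real.log (x+1) * (-β)) + t * (Real.log (y+1) * (-β))) :=
          Real.exp_le_exp.2 hmul
      _ ≤ s * Real.exp (Real.log (x+1) * (-β)) + t * Real.exp (Real.log (y+1) * (-β)) := by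
          have := convexOn_exp.2 (Set.mem_univ (Real.log (x+1) * (-β)))
            (Set.mem_univ (Real.log (y+1) * (-β))) hs ht hst
          simpa using this

lemma jensen_bw {β q : ℝ} (hβ : 0 < β) (h0 : 0 ≤ q) (h1 : q ≤ 1) (n : ℕ) (z : ℕ → ℕ)
    (m : ℝ) (hm : 0 ≤ m)
    (hz : ∑ k ∈ range (n+1), binomialWeight n q k * (z k : ℝ) = m) :
    (m + 1) ^ (-β) ≤ ∑ k ∈ range (n+1), binomialWeight n q k * ((z k : ℝ)+1) ^ (-β) := by
  have := (convexOn_phi hβ).map_sum_le (t := range (n+1)) (w := fun k => binomialWeight n q k)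
    (p := fun k => (z k : ℝ)) (fun k _ => bw_nonneg h0 h1 n k) (bw_sum n q)
    (fun k _ => Set.mem_Ici.2 (Nat.cast_nonneg _))
  simp only [smul_eq_mul] at this
  rw [hz] at this
  exact this

end BinomialTransferAux

open BinomialTransferAux Finset

set_option maxHeartbeats 2000000 in
/-- Lemma 3, a transfer result: if real sequences `a_i` satisfy the
system `a_i(n) = c_i E[a_i(X_{i,n})] + d_i E[a_{1-i}(n - X_{i,n})] + η_i(n)` for `n ≥ 2`,
where `X_{i,n}` is binomial `B(n, p_i)` distributed, `c_i, d_i ∈ (0,1)` with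
`c_0 + d_1 = c_1 + d_0 = 1`, and `η_i(n) = O(n^{-α})` for some `α > 0`, then the
sequences `a_0` and `a_1` are bounded, i.e. `a_i(n) = O(1)`. -/
theorem binomial_recurrence_transfer
    (p : Bool → ℝ) (hp : ∀ i, p i ∈ Set.Ioo (0 : ℝ) 1)
    (c d : Bool → ℝ) (hc : ∀ i, c i ∈ Set.Ioo (0 : ℝ) 1) (hd : ∀ i, d i ∈ Set.Ioo (0 : ℝ) 1)
    (hcd0 : c false + d true = 1) (hcd1 : c true + d false = 1)
    (a η : Bool → ℕ → ℝ)
    (hrec : ∀ i : Bool, ∀ n : ℕ, 2 ≤ n →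
      a i n = c i * (∑ k ∈ Finset.range (n + 1), binomialWeight n (p i) k * a i k)
            + d i * (∑ k ∈ Finset.range (n + 1), binomialWeight n (p i) k * a (!i) (n - k))
            + η i n)
    (α : ℝ) (hα : 0 < α)
    (hη : ∀ i : Bool, (fun n : ℕ => η i n) =O[atTop] fun n : ℕ => (n : ℝ) ^ (-α)) :
    ∃ C : ℝ, ∀ (i : Bool) (n : ℕ), |a i n| ≤ C := by
  -- basic positivity facts
  have hd0 : ∀ i, 0 < d i := fun i => (hd i).1
  have hd1 : ∀ i, d i < 1 := fun i => (hd i).2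
  have hc0 : ∀ i, 0 < c i := fun i => (hc i).1
  have hce : ∀ i : Bool, c i + d (!i) = 1 := by
    intro i; cases i
    · simpa using hcd0
    · simpa using hcd1
  -- normalized sequences
  set u : Bool → ℕ → ℝ := fun i n => |a i n| / d i with hu_def
  have hu_nonneg : ∀ i n, 0 ≤ u i n := fun i n => div_nonneg (abs_nonneg _) (hd0 i).le
  have hu_abs : ∀ i n, |a i n| = d i * u i n := by
    intro i n; rw [hu_def]; rw [mul_comm]; exact (div_mul_cancel₀ _ (hd0 i).ne').symm
  -- the recursive inequality for u
  have hu_rec : ∀ i : Bool, ∀ n : ℕ, 2 ≤ n →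
      u i n ≤ c i * (∑ k ∈ range (n+1), binomialWeight n (p i) k * u i k)
            + d (!i) * (∑ k ∈ range (n+1), binomialWeight n (p i) k * u (!i) (n - k))
            + |η i n| / d i := by
    intro i n hn
    have hwpos : ∀ k, 0 ≤ binomialWeight n (p i) k :=
      fun k => bw_nonneg (hp i).1.le (hp i).2.le n k
    have habs1 : |∑ k ∈ range (n+1), binomialWeight n (p i) k * a i k|
        ≤ d i * ∑ k ∈ range (n+1), binomialWeight n (p i) k * u i k := by
      calc |∑ k ∈ range (n+1), binomialWeight n (p i) k * a i k|
          ≤ ∑ k ∈ range (n+1), |binomialWeight n (p i) k * a i k| :=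
            Finset.abs_sum_le_sum_abs _ _
        _ = ∑ k ∈ range (n+1), binomialWeight n (p i) k * (d i * u i k) := by
            apply Finset.sum_congr rfl; intro k _
            rw [abs_mul, abs_of_nonneg (hwpos k), ← hu_abs]
        _ = d i * ∑ k ∈ range (n+1), binomialWeight n (p i) k * u i k := by
            rw [Finset.mul_sum]; apply Finset.sum_congr rfl; intro k _; ring
    have habs2 : |∑ k ∈ range (n+1), binomialWeight n (p i) k * a (!i) (n-k)|
        ≤ d (!i) * ∑ k ∈ range (n+1), binomialWeight n (p i) k * u (!i) (n-k) := by
      calc |∑ k ∈ range (n+1), binomialWeight n (p i) k * a (!i) (n-k)|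
          ≤ ∑ k ∈ range (n+1), |binomialWeight n (p i) k * a (!i) (n-k)| :=
            Finset.abs_sum_le_sum_abs _ _
        _ = ∑ k ∈ range (n+1), binomialWeight n (p i) k * (d (!i) * u (!i) (n-k)) := by
            apply Finset.sum_congr rfl; intro k _
            rw [abs_mul, abs_of_nonneg (hwpos k), ← hu_abs]
        _ = d (!i) * ∑ k ∈ range (n+1), binomialWeight n (p i) k * u (!i) (n-k) := by
            rw [Finset.mul_sum]; apply Finset.sum_congr rfl; intro k _; ring
    have hstep : |a i n| ≤ c i * (d i * ∑ k ∈ range (n+1), binomialWeight n (p i) k * u i k)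
        + d i * (d (!i) * ∑ k ∈ range (n+1), binomialWeight n (p i) k * u (!i) (n-k))
        + |η i n| := by
      rw [hrec i n hn]
      calc |c i * _ + d i * _ + η i n|
          ≤ |c i * (∑ k ∈ range (n+1), binomialWeight n (p i) k * a i k)|
            + |d i * (∑ k ∈ range (n+1), binomialWeight n (p i) k * a (!i) (n-k))|
            + |η i n| := by
              exact (abs_add_le _ _).trans (add_le_add (abs_add_le _ _) le_rfl)
        _ ≤ c i * (d i * ∑ k ∈ range (n+1), binomialWeight n (p i) k * u i k)
            + d i * (d (!i) * ∑ k ∈ range (n+1), binomialWeight n (p i) k * u (!i) (n-k))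
            + |η i n| := by
              gcongr
              · rw [abs_mul, abs_of_nonneg (hc0 i).le]
                exact mul_le_mul_of_nonneg_left habs1 (hc0 i).le
              · rw [abs_mul, abs_of_nonneg (hd0 i).le]
                exact mul_le_mul_of_nonneg_left habs2 (hd0 i).le
    rw [hu_def]
    rw [div_le_iff₀ (hd0 i)]
    calc |a i n| ≤ _ := hstep
      _ = (c i * (∑ k ∈ range (n+1), binomialWeight n (p i) k * u i k)
            + d (!i) * (∑ k ∈ range (n+1), binomialWeight n (p i) k * u (!i) (n - k))
            + |η i n| / d i) * d i := by
          rw [add_mul, add_mul, div_mul_cancel₀ _ (hd0 i).ne']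
          ring
  -- constants
  set r : ℝ := max (max (p false) (1 - p false)) (max (p true) (1 - p true)) with hr_def
  have hrp : ∀ i, p i ≤ r := by
    intro i; cases i
    · exact le_trans (le_max_left _ _) (le_max_left _ _)
    · exact le_trans (le_max_left _ _) (le_max_right _ _)
  have hrq : ∀ i, 1 - p i ≤ r := by
    intro i; cases i
    · exact le_trans (le_max_right _ _) (le_max_left _ _)
    · exact le_trans (le_max_right _ _) (le_max_right _ _)
  have hr0 : 0 < r := lt_of_lt_of_le (hp false).1 (hrp false)
  have hr1 : r < 1 := by
    apply max_lt
    · exact max_lt (hp false).2 (by linarith [(hp false).1])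
    · exact max_lt (hp true).2 (by linarith [(hp true).1])
  set β : ℝ := min α 1 with hβ_def
  have hβ0 : 0 < β := lt_min hα one_pos
  have hβ1 : β ≤ 1 := min_le_right _ _
  have hβα : β ≤ α := min_le_left _ _
  set r' : ℝ := (1 + r) / 2 with hr'_def
  have hr'0 : 0 < r' := by rw [hr'_def]; linarith
  have hr'1 : r' < 1 := by rw [hr'_def]; linarith
  set γ : ℝ := r' ^ (-β) with hγ_def
  have hγ : 1 < γ := by
    rw [hγ_def]
    exact (Real.one_lt_rpow_iff_of_pos hr'0).2 (Or.inr ⟨hr'1, by linarith⟩)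
  set δ : ℝ := γ - 1 with hδ_def
  have hδ : 0 < δ := by rw [hδ_def]; linarith
  set φ : ℕ → ℝ := fun n => ((n:ℝ) + 1) ^ (-β) with hφ_def
  have hφ0 : ∀ n, 0 < φ n := fun n => Real.rpow_pos_of_pos (by positivity) _
  have hφ1 : ∀ n, φ n ≤ 1 := fun n =>
    Real.rpow_le_one_of_one_le_of_nonpos (by simp [le_add_iff_nonneg_left]) (by linarith)
  -- growth estimate
  have hgrow : ∀ q : ℝ, 0 ≤ q → q ≤ r → ∀ n : ℕ, 1 ≤ n →
      γ * φ n ≤ ((n:ℝ) * q + 1) ^ (-β) := by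
    intro q hq0 hqr n hn
    have hn1 : (1:ℝ) ≤ (n:ℝ) := by exact_mod_cast hn
    have h1 : (n:ℝ) * q + 1 ≤ r' * ((n:ℝ) + 1) := by
      have hq : (n:ℝ) * q ≤ (n:ℝ) * r := by nlinarith
      rw [hr'_def]
      nlinarith [mul_nonneg (sub_nonneg.2 hn1) (sub_nonneg.2 hr1.le)]
    have hpos : (0:ℝ) < (n:ℝ) * q + 1 := by positivity
    calc γ * φ n = (r' * ((n:ℝ) + 1)) ^ (-β) := by
          rw [Real.mul_rpow hr'0.le (by positivity)]
      _ ≤ ((n:ℝ) * q + 1) ^ (-β) := Real.rpow_le_rpow_of_nonpos hpos h1 (by linarith)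
  -- the error term
  have hKex : ∃ K : ℝ, 0 ≤ K ∧ ∀ᶠ n : ℕ in atTop, ∀ i, |η i n| / d i ≤ K * (n:ℝ) ^ (-α) := by
    obtain ⟨Kf, hKf⟩ := Asymptotics.isBigO_iff.1 (hη false)
    obtain ⟨Kt, hKt⟩ := Asymptotics.isBigO_iff.1 (hη true)
    set dm : ℝ := min (d false) (d true) with hdm_def
    have hdm : 0 < dm := lt_min (hd0 false) (hd0 true)
    set K0 : ℝ := max (max Kf Kt) 0 with hK0_def
    have hK00 : 0 ≤ K0 := le_max_right _ _
    refine ⟨K0 / dm, by positivity, ?_⟩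
    filter_upwards [hKf.filter_mono (le_refl _) , hKt] with n h1 h2
    intro i
    have hrnn : 0 ≤ (n:ℝ) ^ (-α) := Real.rpow_nonneg (Nat.cast_nonneg n) _
    have hnorm : ‖(n:ℝ) ^ (-α)‖ = (n:ℝ) ^ (-α) := Real.norm_of_nonneg hrnn
    have hd_i : dm ≤ d i := by
      cases i; exacts [min_le_left _ _, min_le_right _ _]
    have hηb : |η i n| ≤ K0 * (n:ℝ) ^ (-α) := by
      cases i
      · calc |η false n| ≤ Kf * ‖(n:ℝ) ^ (-α)‖ := h1
          _ = Kf * (n:ℝ) ^ (-α) := by rw [hnorm]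
          _ ≤ K0 * (n:ℝ) ^ (-α) := by
              apply mul_le_mul_of_nonneg_right _ hrnn
              exact le_trans (le_max_left _ _) (le_max_left _ _)
      · calc |η true n| ≤ Kt * ‖(n:ℝ) ^ (-α)‖ := h2
          _ = Kt * (n:ℝ) ^ (-α) := by rw [hnorm]
          _ ≤ K0 * (n:ℝ) ^ (-α) := by
              apply mul_le_mul_of_nonneg_right _ hrnn
              exact le_trans (le_max_right _ _) (le_max_left _ _)
    calc |η i n| / d i ≤ (K0 * (n:ℝ) ^ (-α)) / dm :=
        div_le_div₀ (by positivity) hηb hdm hd_i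
      _ = K0 / dm * (n:ℝ) ^ (-α) := by ring
  obtain ⟨K, hK0, hKev⟩ := hKex
  -- tail smallness
  have htt : Filter.Tendsto (fun n : ℕ => ((n:ℝ) + 1) * r ^ n) atTop (nhds 0) := by
    have h1 : Filter.Tendsto (fun n : ℕ => (n:ℝ) * r ^ n) atTop (nhds 0) := by
      have hs := summable_pow_mul_geometric_of_norm_lt_one (R := ℝ) 1
        (r := r) (by rw [Real.norm_eq_abs, abs_of_pos hr0]; exact hr1)
      simpa using hs.tendsto_atTop_zero
    have h2 : Filter.Tendsto (fun n : ℕ => r ^ n) atTop (nhds 0) :=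
      tendsto_pow_atTop_nhds_zero_of_lt_one hr0.le hr1
    have h3 := h1.add h2
    rw [add_zero] at h3
    exact Filter.Tendsto.congr (fun n => by ring) h3
  have e3 : ∀ᶠ n : ℕ in atTop, ((n:ℝ) + 1) * r ^ n ≤ δ / 8 :=
    htt.eventually_le_const (by linarith)
  have e4 : ∀ᶠ n : ℕ in atTop, r ^ n ≤ 1 / 2 :=
    (tendsto_pow_atTop_nhds_zero_of_lt_one hr0.le hr1).eventually_le_const (by norm_num)
  obtain ⟨N₀, hN₀⟩ := Filter.eventually_atTop.1
    ((Filter.eventually_ge_atTop 2).and (hKev.and (e3.and e4)))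
  -- base bound
  set B : ℝ := ∑ m ∈ range N₀, (u false m + u true m) with hB_def
  have hB : ∀ n, n < N₀ → ∀ i, u i n ≤ B := by
    intro n hn i
    have h1 : u false n + u true n ≤ B := by
      rw [hB_def]
      exact Finset.single_le_sum (f := fun m => u false m + u true m)
        (fun m _ => add_nonneg (hu_nonneg _ _) (hu_nonneg _ _)) (mem_range.2 hn)
    cases i
    · linarith [hu_nonneg true n]
    · linarith [hu_nonneg false n]
  set C : ℝ := max 0 (max (8 * K / δ) (2 * B)) with hC_def
  have hC0 : 0 ≤ C := le_max_left _ _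
  have hCK : 8 * K / δ ≤ C := le_trans (le_max_left _ _) (le_max_right _ _)
  have hCB : 2 * B ≤ C := le_trans (le_max_right _ _) (le_max_right _ _)
  have hCK' : 8 * K ≤ δ * C := by
    rw [div_le_iff₀ hδ] at hCK; linarith
  -- main induction
  have main : ∀ n : ℕ, ∀ i, u i n ≤ C * (1 - φ n / 2) := by
    intro n
    induction n using Nat.strong_induction_on with
    | _ n ih =>
    by_cases hn : n < N₀
    · intro i
      have h1 := hB n hn i
      have h2 := hφ1 n
      have h3 := (hφ0 n).le
      nlinarith
    · push_neg at hn
      obtain ⟨hn2, hηn, htail, hhalf⟩ := hN₀ n hn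
      set M : ℝ := max (u false n) (u true n) with hM_def
      have hM0 : 0 ≤ M := le_trans (hu_nonneg false n) (le_max_left _ _)
      have hn1 : 1 ≤ n := by omega
      have hnR : (1:ℝ) ≤ (n:ℝ) := by exact_mod_cast hn1
      have key : ∀ i, u i n ≤ C - C / 2 * (γ * φ n) + r ^ n * M + K * (n:ℝ) ^ (-α) := by
        intro i
        have hwpos : ∀ k, 0 ≤ binomialWeight n (p i) k :=
          fun k => bw_nonneg (hp i).1.le (hp i).2.le n k
        set w : ℕ → ℝ := binomialWeight n (p i) with hw
        set f : ℕ → ℝ := fun k => C * (1 - φ k / 2) with hf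
        have hf0 : ∀ k, 0 ≤ f k := by
          intro k
          have := hφ1 k
          have := (hφ0 k).le
          rw [hf]; dsimp only; nlinarith
        have huM : ∀ j, u j n ≤ M := by
          intro j; rw [hM_def]; cases j
          exacts [le_max_left _ _, le_max_right _ _]
        have hT1 : ∑ k ∈ range (n+1), w k * u i k
            ≤ C - C / 2 * ((n:ℝ) * p i + 1) ^ (-β) + r ^ n * M := by
          rw [Finset.sum_range_succ]
          have hstep1 : ∑ k ∈ range n, w k * u i k ≤ ∑ k ∈ range n, w k * f k :=
            Finset.sum_le_sum fun k hk =>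
              mul_le_mul_of_nonneg_left (ih k (mem_range.1 hk) i) (hwpos k)
          have hstep2 : ∑ k ∈ range n, w k * f k ≤ ∑ k ∈ range (n+1), w k * f k := by
            rw [Finset.sum_range_succ]
            nlinarith [mul_nonneg (hwpos n) (hf0 n)]
          have hstep3 : ∑ k ∈ range (n+1), w k * f k
              ≤ C - C / 2 * ((n:ℝ) * p i + 1) ^ (-β) := by
            have hjen := jensen_bw hβ0 (hp i).1.le (hp i).2.le n id ((n:ℝ) * p i)
              (mul_nonneg (Nat.cast_nonneg n) (hp i).1.le) (by simpa using bw_mean n (p i))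
            have hexp : ∑ k ∈ range (n+1), w k * f k
                = C * ∑ k ∈ range (n+1), w k - C / 2 * ∑ k ∈ range (n+1), w k * φ k := by
              rw [Finset.mul_sum, Finset.mul_sum, ← Finset.sum_sub_distrib]
              apply Finset.sum_congr rfl; intro k _; rw [hf]; dsimp only; ring
            rw [hexp, hw, bw_sum]
            have hj : ((n:ℝ) * p i + 1) ^ (-β) ≤ ∑ k ∈ range (n+1), w k * φ k := by
              simpa [hw, hφ_def] using hjen
            nlinarith
          have hwn : w n * u i n ≤ r ^ n * M := by
            have h1 : w n = (p i) ^ n := by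
              rw [hw]; unfold binomialWeight; simp
            have h2 : (p i) ^ n ≤ r ^ n := pow_le_pow_left₀ (hp i).1.le (hrp i) n
            have := mul_le_mul (h1 ▸ h2) (huM i) (hu_nonneg i n) (by positivity)
            linarith
          linarith
        have hT2 : ∑ k ∈ range (n+1), w k * u (!i) (n - k)
            ≤ C - C / 2 * ((n:ℝ) * (1 - p i) + 1) ^ (-β) + r ^ n * M := by
          rw [Finset.sum_range_succ' (fun k => w k * u (!i) (n - k))]
          have hstep1 : ∑ k ∈ range n, w (k+1) * u (!i) (n - (k+1))
              ≤ ∑ k ∈ range n, w (k+1) * f (n - (k+1)) := by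
            apply Finset.sum_le_sum
            intro k hk
            have hlt : n - (k+1) < n := by omega
            exact mul_le_mul_of_nonneg_left (ih _ hlt (!i)) (hwpos _)
          have hstep2 : ∑ k ∈ range n, w (k+1) * f (n - (k+1))
              ≤ ∑ k ∈ range (n+1), w k * f (n - k) := by
            rw [Finset.sum_range_succ' (fun k => w k * f (n - k))]
            nlinarith [mul_nonneg (hwpos 0) (hf0 (n - 0))]
          have hstep3 : ∑ k ∈ range (n+1), w k * f (n - k)
              ≤ C - C / 2 * ((n:ℝ) * (1 - p i) + 1) ^ (-β) := by
            have hjen := jensen_bw hβ0 (hp i).1.le (hp i).2.le n (fun k => n - k)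
              ((n:ℝ) * (1 - p i))
              (mul_nonneg (Nat.cast_nonneg n) (by linarith [(hp i).2.le])) (bw_mean' n (p i))
            have hexp : ∑ k ∈ range (n+1), w k * f (n - k)
                = C * ∑ k ∈ range (n+1), w k - C / 2 * ∑ k ∈ range (n+1), w k * φ (n - k) := by
              rw [Finset.mul_sum, Finset.mul_sum, ← Finset.sum_sub_distrib]
              apply Finset.sum_congr rfl; intro k _; rw [hf]; dsimp only; ring
            rw [hexp, hw, bw_sum]
            have hj : ((n:ℝ) * (1 - p i) + 1) ^ (-β) ≤ ∑ k ∈ range (n+1), w k * φ (n - k) := by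
              simpa [hw, hφ_def] using hjen
            nlinarith
          have hw0 : w 0 * u (!i) (n - 0) ≤ r ^ n * M := by
            have h1 : w 0 = (1 - p i) ^ n := by
              rw [hw]; unfold binomialWeight; simp
            have h2 : (1 - p i) ^ n ≤ r ^ n :=
              pow_le_pow_left₀ (by linarith [(hp i).2.le]) (hrq i) n
            have h3 : u (!i) (n - 0) ≤ M := by
              simpa using huM (!i)
            have := mul_le_mul (h1 ▸ h2) h3 (hu_nonneg (!i) (n - 0)) (by positivity)
            linarith
          linarith
        have hγ1 : γ * φ n ≤ ((n:ℝ) * p i + 1) ^ (-β) := hgrow (p i) (hp i).1.le (hrp i) n hn1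
        have hγ2 : γ * φ n ≤ ((n:ℝ) * (1 - p i) + 1) ^ (-β) :=
          hgrow _ (by linarith [(hp i).2.le]) (hrq i) n hn1
        have hT1' : ∑ k ∈ range (n+1), w k * u i k
            ≤ C - C / 2 * (γ * φ n) + r ^ n * M := by nlinarith
        have hT2' : ∑ k ∈ range (n+1), w k * u (!i) (n - k)
            ≤ C - C / 2 * (γ * φ n) + r ^ n * M := by nlinarith
        have hrec' := hu_rec i n hn2
        rw [← hw] at hrec'
        calc u i n ≤ c i * (∑ k ∈ range (n+1), w k * u i k)
              + d (!i) * (∑ k ∈ range (n+1), w k * u (!i) (n - k)) + |η i n| / d i := hrec'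
          _ ≤ c i * (C - C / 2 * (γ * φ n) + r ^ n * M)
              + d (!i) * (C - C / 2 * (γ * φ n) + r ^ n * M) + K * (n:ℝ) ^ (-α) := by
              exact add_le_add (add_le_add
                  (mul_le_mul_of_nonneg_left hT1' (hc0 i).le)
                  (mul_le_mul_of_nonneg_left hT2' (hd0 (!i)).le)) (hηn i)
          _ = (c i + d (!i)) * (C - C / 2 * (γ * φ n) + r ^ n * M) + K * (n:ℝ) ^ (-α) := by
              ring
          _ = C - C / 2 * (γ * φ n) + r ^ n * M + K * (n:ℝ) ^ (-α) := by
              rw [hce i]; ring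
      intro i
      have hMb : M ≤ C - C / 2 * (γ * φ n) + r ^ n * M + K * (n:ℝ) ^ (-α) :=
        max_le (key false) (key true)
      have hrn0 : (0:ℝ) ≤ r ^ n := by positivity
      have hφn := hφ0 n
      have hφn1 := hφ1 n
      have hfact1 : K * (n:ℝ) ^ (-α) ≤ 2 * K * φ n := by
        have h1 : (n:ℝ) ^ (-α) ≤ (n:ℝ) ^ (-β) :=
          Real.rpow_le_rpow_of_exponent_le hnR (by linarith)
        have h2 : (n:ℝ) ^ (-β) ≤ 2 * φ n := by
          have ha : ((n:ℝ) + 1) ≤ 2 * (n:ℝ) := by linarith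
          have hb : (2 * (n:ℝ)) ^ (-β) ≤ ((n:ℝ) + 1) ^ (-β) :=
            Real.rpow_le_rpow_of_nonpos (by positivity) ha (by linarith)
          have hcm : (2 * (n:ℝ)) ^ (-β) = (2:ℝ) ^ (-β) * (n:ℝ) ^ (-β) :=
            Real.mul_rpow (by norm_num) (by positivity)
          have hdm : (2:ℝ) ^ (-(1:ℝ)) ≤ (2:ℝ) ^ (-β) :=
            Real.rpow_le_rpow_of_exponent_le (by norm_num) (by linarith)
          have hem : (2:ℝ) ^ (-(1:ℝ)) = 1 / 2 := by
            rw [Real.rpow_neg_one]; norm_num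
          have hnb : (0:ℝ) ≤ (n:ℝ) ^ (-β) := Real.rpow_nonneg (by positivity) _
          rw [hem] at hdm
          have h5 : 1/2 * (n:ℝ) ^ (-β) ≤ (2:ℝ) ^ (-β) * (n:ℝ) ^ (-β) :=
            mul_le_mul_of_nonneg_right hdm hnb
          rw [hφ_def]; dsimp only
          nlinarith [hb, hcm, h5]
        have hna : (0:ℝ) ≤ (n:ℝ) ^ (-α) := Real.rpow_nonneg (by positivity) _
        nlinarith
      have hfact2 : r ^ n ≤ δ / 8 * φ n := by
        have hp1 : (0:ℝ) < (n:ℝ) + 1 := by positivity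
        have h1 : ((n:ℝ) + 1) ^ (-(1:ℝ)) ≤ φ n :=
          Real.rpow_le_rpow_of_exponent_le (by linarith) (by linarith)
        have h2 : ((n:ℝ) + 1) ^ (-(1:ℝ)) = ((n:ℝ) + 1)⁻¹ := Real.rpow_neg_one _
        have h3 : r ^ n ≤ δ / 8 * ((n:ℝ) + 1)⁻¹ := by
          calc r ^ n = ((n:ℝ) + 1) * r ^ n / ((n:ℝ) + 1) :=
              (mul_div_cancel_left₀ _ hp1.ne').symm
            _ ≤ (δ / 8) / ((n:ℝ) + 1) := by gcongr
            _ = δ / 8 * ((n:ℝ) + 1)⁻¹ := by ring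
        calc r ^ n ≤ δ / 8 * ((n:ℝ) + 1)⁻¹ := h3
          _ = δ / 8 * ((n:ℝ) + 1) ^ (-(1:ℝ)) := by rw [h2]
          _ ≤ δ / 8 * φ n := mul_le_mul_of_nonneg_left h1 (by linarith)
      have htarget : M ≤ C * (1 - φ n / 2) := by
        have hpos : (0:ℝ) < 1 - r ^ n := by linarith
        have hCf2 : C * r ^ n ≤ C * (δ / 8 * φ n) := mul_le_mul_of_nonneg_left hfact2 hC0
        have hKφ : 0 ≤ (δ * C - 8 * K) * φ n :=
          mul_nonneg (by linarith) hφn.le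
        have hE : 0 ≤ C * φ n * r ^ n :=
          mul_nonneg (mul_nonneg hC0 hφn.le) hrn0
        have hγδ : γ = δ + 1 := by rw [hδ_def]; ring
        have hKφ0 : 0 ≤ K * φ n := mul_nonneg hK0 hφn.le
        have hγφ : C / 2 * (γ * φ n) = C / 2 * (δ * φ n) + C / 2 * φ n := by rw [hγδ]; ring
        have hMb2 : M * (1 - r ^ n) ≤ C - C / 2 * (γ * φ n) + K * (n:ℝ) ^ (-α) := by
          nlinarith [hMb]
        have hchain : C - C / 2 * (γ * φ n) + K * (n:ℝ) ^ (-α)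
            ≤ (C * (1 - φ n / 2)) * (1 - r ^ n) := by
          nlinarith [hfact1, hCf2, hKφ, hE, hKφ0, hγφ]
        have hineq : M * (1 - r ^ n) ≤ (C * (1 - φ n / 2)) * (1 - r ^ n) :=
          le_trans hMb2 hchain
        exact le_of_mul_le_mul_right hineq hpos
      calc u i n ≤ M := by
            rw [hM_def]; cases i; exacts [le_max_left _ _, le_max_right _ _]
        _ ≤ C * (1 - φ n / 2) := htarget
  refine ⟨C, fun i n => ?_⟩
  have h1 := main n i
  have h2 : u i n ≤ C := le_trans h1 (by nlinarith [hφ0 n, hφ1 n])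
  calc |a i n| = d i * u i n := hu_abs i n
    _ ≤ 1 * C := mul_le_mul (hd1 i).le h2 (hu_nonneg i n) zero_le_one
    _ = C := one_mul C
end
end

section
/- Let s ∈ (2,3] and p_{00}, p_{11} ∈ (0,1), and set ξ := max_{i∈{0,1}} (p_{ii}^{s/2} + (1 − p_{ii})^{s/2}). Then ξ < 1, and for all (τ_0,τ_1), (ρ_0,ρ_1) ∈ M² the map T satisfies ζ_s^∨(T(τ_0,τ_1), T(ρ_0,ρ_1)) ≤ ξ · ζ_s^∨((τ_0,τ_1), (ρ_0,ρ_1)); in particular T is a contraction on (M², ζ_s^∨). -/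
open MeasureTheory ProbabilityTheory Real Filter Topology

noncomputable section

/-- The class `F_s` of test functions for the Zolotarev metric `ζ_s`, `2 < s ≤ 3`:
twice continuously differentiable functions whose second derivative is Hölder
continuous of order `s - 2` with constant `1`. -/
def zolotarevF (s : ℝ) : Set (ℝ → ℝ) :=
  {f | ContDiff ℝ 2 f ∧
    ∀ x y : ℝ, |iteratedDeriv 2 f x - iteratedDeriv 2 f y| ≤ |x - y| ^ (s - 2)}

/-- The Zolotarev distance `ζ_s(τ, ρ) = sup_{f ∈ F_s} |∫ f dτ - ∫ f dρ|`. -/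
def zolotarevDist (s : ℝ) (τ ρ : Measure ℝ) : ℝ :=
  sSup {r : ℝ | ∃ f ∈ zolotarevF s, r = |(∫ x, f x ∂τ) - ∫ x, f x ∂ρ|}

/-- Membership in `M_s(0,1)`: Borel probability measures on `ℝ` with mean `0`,
variance `1` and finite absolute moment of order `s`. -/
def MemMs (s : ℝ) (τ : Measure ℝ) : Prop :=
  IsProbabilityMeasure τ ∧ (∫ x, x ∂τ) = 0 ∧ (∫ x, x ^ 2 ∂τ) = 1 ∧
    Integrable (fun x => |x| ^ s) τ

/-- The map `T` on pairs of probability measures: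
`T(τ_0, τ_1) = (L(√p_{00} W^0 + √(1-p_{00}) W^1), L(√(1-p_{11}) W^0 + √p_{11} W^1))`
with `W^0 ∼ τ_0`, `W^1 ∼ τ_1` independent. -/
def Tmap (p00 p11 : ℝ) (τ : Measure ℝ × Measure ℝ) : Measure ℝ × Measure ℝ :=
  ((τ.1.prod τ.2).map fun z => Real.sqrt p00 * z.1 + Real.sqrt (1 - p00) * z.2,
   (τ.1.prod τ.2).map fun z => Real.sqrt (1 - p11) * z.1 + Real.sqrt p11 * z.2)

/-- The metric `ζ_s^∨` on pairs. -/
def zolotarevDistMax (s : ℝ) (τ ρ : Measure ℝ × Measure ℝ) : ℝ :=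
  max (zolotarevDist s τ.1 ρ.1) (zolotarevDist s τ.2 ρ.2)

lemma abs_le_of_mem_segment {t x : ℝ} (h : t ∈ segment ℝ 0 x) : |t| ≤ |x| := by
  obtain ⟨u, v, hu, hv, huv, ht⟩ := h
  have : t = v * x := by simpa [smul_eq_mul] using ht.symm
  rw [this, abs_mul]
  have : |v| = v := abs_of_nonneg hv
  nlinarith [abs_nonneg x]

lemma mvt_abs {g g' : ℝ → ℝ} {C : ℝ} (x : ℝ)
    (hg : ∀ t, HasDerivAt g (g' t) t)
    (hb : ∀ t ∈ segment ℝ 0 x, |g' t| ≤ C) : |g x - g 0| ≤ C * |x| := by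
  have := Convex.norm_image_sub_le_of_norm_hasDerivWithin_le
    (f := g) (f' := g') (s := segment ℝ 0 x)
    (fun t ht => (hg t).hasDerivWithinAt) hb (convex_segment _ _)
    (left_mem_segment ℝ 0 x) (right_mem_segment ℝ 0 x)
  simpa using this

lemma deriv_facts {f : ℝ → ℝ} (hf : ContDiff ℝ 2 f) :
    Differentiable ℝ f ∧ Differentiable ℝ (deriv f) ∧
      (∀ x, HasDerivAt (deriv f) (iteratedDeriv 2 f x) x) ∧ Continuous (iteratedDeriv 2 f) := by
  have h1 : Differentiable ℝ f := hf.differentiable (by norm_num)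
  have h2' : ContDiff ℝ 1 (deriv f) := by
    have := (contDiff_succ_iff_deriv (n := 1)).mp (by exact_mod_cast hf)
    exact this.2.2
  have h2 : Differentiable ℝ (deriv f) := h2'.differentiable (by norm_num)
  have h3 : ∀ x, HasDerivAt (deriv f) (iteratedDeriv 2 f x) x := by
    intro x
    have : iteratedDeriv 2 f = deriv (deriv f) := by
      rw [iteratedDeriv_succ, iteratedDeriv_one]
    rw [this]
    exact (h2 x).hasDerivAt
  refine ⟨h1, h2, h3, ?_⟩
  have : iteratedDeriv 2 f = deriv (deriv f) := by
    rw [iteratedDeriv_succ, iteratedDeriv_one]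
  rw [this]
  exact h2'.continuous_deriv le_rfl

lemma rpow_helper {x s : ℝ} (hs : 2 < s) : |x| ^ (s-2) * x ^ 2 = |x| ^ s := by
  rcases eq_or_ne x 0 with rfl | hx
  · simp [Real.zero_rpow (by linarith : (0:ℝ) < s - 2).ne',
      Real.zero_rpow (by linarith : (0:ℝ) < s).ne']
  · have h : x ^ 2 = |x| ^ ((2:ℕ):ℝ) := by rw [Real.rpow_natCast, sq_abs]
    rw [h, ← Real.rpow_add (abs_pos.2 hx)]; norm_num

lemma taylor_bound {s : ℝ} (hs : 2 < s) {f : ℝ → ℝ} (hf : f ∈ zolotarevF s) (x : ℝ) :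
    |f x - f 0 - deriv f 0 * x - iteratedDeriv 2 f 0 * x ^ 2 / 2| ≤ |x| ^ s := by
  obtain ⟨hc, hH⟩ := hf
  obtain ⟨h1, h2, h3, _⟩ := deriv_facts hc
  set c := iteratedDeriv 2 f 0 with hc0
  -- step 1
  have step1 : ∀ z : ℝ, |deriv f z - deriv f 0 - c * z| ≤ |z| ^ (s-2) * |z| := by
    intro z
    have hg : ∀ t, HasDerivAt (fun t => deriv f t - c * t)
        (iteratedDeriv 2 f t - c) t := by
      intro t
      exact ((h3 t).sub ((hasDerivAt_id t).const_mul c)).congr_deriv (by ring)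
    have hb : ∀ t ∈ segment ℝ 0 z, |iteratedDeriv 2 f t - c| ≤ |z| ^ (s-2) := by
      intro t ht
      calc |iteratedDeriv 2 f t - c| ≤ |t - 0| ^ (s-2) := hH t 0
        _ ≤ |z| ^ (s-2) := by
            rw [sub_zero]
            exact Real.rpow_le_rpow (abs_nonneg t) (abs_le_of_mem_segment ht) (by linarith)
    have := mvt_abs z hg hb
    simp only [sub_sub] at this ⊢
    rw [add_comm (deriv f 0)]
    simpa using this
  -- step 2
  have hk : ∀ t, HasDerivAt (fun t => f t - deriv f 0 * t - c * t ^ 2 / 2)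
      (deriv f t - deriv f 0 - c * t) t := by
    intro t
    have hp : HasDerivAt (fun t : ℝ => c * t ^ 2 / 2) (c * t) t := by
      have := (hasDerivAt_pow 2 t).const_mul (c / 2)
      have he : (fun t : ℝ => c * t ^ 2 / 2) = fun u => c / 2 * u ^ 2 := by funext u; ring
      rw [he]
      exact this.congr_deriv (by push_cast; ring)
    exact ((((h1 t).hasDerivAt).sub ((hasDerivAt_id t).const_mul (deriv f 0))).sub hp).congr_deriv (by ring)
  have hb2 : ∀ t ∈ segment ℝ 0 x, |deriv f t - deriv f 0 - c * t| ≤ |x| ^ (s-2) * |x| := by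
    intro t ht
    refine (step1 t).trans ?_
    have h1' : |t| ^ (s-2) ≤ |x| ^ (s-2) :=
      Real.rpow_le_rpow (abs_nonneg t) (abs_le_of_mem_segment ht) (by linarith)
    have h2' := abs_le_of_mem_segment ht
    have := Real.rpow_nonneg (abs_nonneg t) (s-2)
    nlinarith [Real.rpow_nonneg (abs_nonneg x) (s-2), abs_nonneg t]
  have := mvt_abs x hk hb2
  calc |f x - f 0 - deriv f 0 * x - c * x ^ 2 / 2|
      = |(f x - deriv f 0 * x - c * x ^ 2 / 2) - (f 0 - deriv f 0 * 0 - c * 0 ^ 2 / 2)| := by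
        ring_nf
    _ ≤ |x| ^ (s-2) * |x| * |x| := this
    _ = |x| ^ (s-2) * x ^ 2 := by rw [← sq_abs]; ring
    _ = |x| ^ s := rpow_helper hs

lemma MemMs.integrable_id {s : ℝ} (hs : 2 < s) {τ : Measure ℝ} (hτ : MemMs s τ) :
    Integrable (fun x : ℝ => x) τ := by
  have : IsProbabilityMeasure τ := hτ.1
  refine Integrable.mono' ((integrable_const 1).add hτ.2.2.2)
    measurable_id.aestronglyMeasurable (Filter.Eventually.of_forall fun x => ?_)
  simp only [Real.norm_eq_abs, Pi.add_apply]
  rcases le_or_gt (|x|) 1 with h | h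
  · have := Real.rpow_nonneg (abs_nonneg x) s; linarith
  · have : |x| ^ (1:ℝ) ≤ |x| ^ s :=
      Real.rpow_le_rpow_of_exponent_le h.le (by linarith)
    rw [Real.rpow_one] at this; linarith

lemma MemMs.integrable_sq {s : ℝ} (hs : 2 < s) {τ : Measure ℝ} (hτ : MemMs s τ) :
    Integrable (fun x : ℝ => x ^ 2) τ := by
  have : IsProbabilityMeasure τ := hτ.1
  refine Integrable.mono' ((integrable_const 1).add hτ.2.2.2)
    (measurable_id.pow_const 2).aestronglyMeasurable (Filter.Eventually.of_forall fun x => ?_)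
  simp only [Real.norm_eq_abs, Pi.add_apply]
  have hx2 : |x ^ 2| = |x| ^ 2 := by rw [abs_pow]
  rw [hx2]
  rcases le_or_gt (|x|) 1 with h | h
  · have := Real.rpow_nonneg (abs_nonneg x) s
    have h2 : |x| ^ 2 ≤ 1 := pow_le_one₀ (abs_nonneg x) h
    linarith
  · have h3 : |x| ^ ((2:ℕ):ℝ) ≤ |x| ^ s :=
      Real.rpow_le_rpow_of_exponent_le h.le (by exact_mod_cast hs.le)
    rw [Real.rpow_natCast] at h3
    linarith

lemma MemMs.integrable_of_F {s : ℝ} (hs : 2 < s) {τ : Measure ℝ} (hτ : MemMs s τ)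
    {f : ℝ → ℝ} (hf : f ∈ zolotarevF s) :
    Integrable (fun x => f x - f 0 - deriv f 0 * x - iteratedDeriv 2 f 0 * x ^ 2 / 2) τ := by
  have : IsProbabilityMeasure τ := hτ.1
  have hcont : Continuous f := hf.1.continuous
  refine Integrable.mono' hτ.2.2.2 ?_ (Filter.Eventually.of_forall fun x => ?_)
  · refine Continuous.aestronglyMeasurable ?_
    exact ((hcont.sub continuous_const).sub (continuous_const.mul continuous_id)).sub
      ((continuous_const.mul (continuous_pow 2)).div_const 2)
  · simpa [Real.norm_eq_abs] using taylor_bound hs hf x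

lemma abs_integral_sub_le {s : ℝ} (hs : 2 < s) {τ ρ : Measure ℝ}
    (hτ : MemMs s τ) (hρ : MemMs s ρ) {f : ℝ → ℝ} (hf : f ∈ zolotarevF s) :
    |(∫ x, f x ∂τ) - ∫ x, f x ∂ρ| ≤ (∫ x, |x| ^ s ∂τ) + ∫ x, |x| ^ s ∂ρ := by
  set c := iteratedDeriv 2 f 0
  set R : ℝ → ℝ := fun x => f x - f 0 - deriv f 0 * x - c * x ^ 2 / 2 with hR
  have key : ∀ (μ : Measure ℝ), MemMs s μ →
      ∫ x, f x ∂μ = f 0 + c / 2 + ∫ x, R x ∂μ := by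
    intro μ hμ
    have : IsProbabilityMeasure μ := hμ.1
    have hiR : Integrable R μ := hμ.integrable_of_F hs hf
    have hA : Integrable (fun x : ℝ => deriv f 0 * x) μ := (hμ.integrable_id hs).const_mul _
    have hB : Integrable (fun x : ℝ => c * x ^ 2 / 2) μ := by
      have h := (hμ.integrable_sq hs).const_mul (c / 2)
      have he : (fun x : ℝ => c * x ^ 2 / 2) = fun x => c / 2 * x ^ 2 := by funext x; ring
      rwa [he]
    have hi2 : Integrable (fun x : ℝ => f 0 + deriv f 0 * x) μ := by
      simpa using (integrable_const (f 0)).add hA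
    have hi1 : Integrable (fun x : ℝ => f 0 + deriv f 0 * x + c * x ^ 2 / 2) μ := by
      exact hi2.add hB
    have hfeq : (fun x => f x) =
        fun x => (f 0 + deriv f 0 * x + c * x ^ 2 / 2) + R x := by
      funext x; simp only [hR]; ring
    rw [hfeq, integral_add hi1 hiR, integral_add hi2 hB,
      integral_add (integrable_const (f 0)) hA]
    have h1 : ∫ _x, f 0 ∂μ = f 0 := by simp
    have h2 : ∫ x, deriv f 0 * x ∂μ = 0 := by
      rw [integral_const_mul, hμ.2.1, mul_zero]
    have h3 : ∫ x, c * x ^ 2 / 2 ∂μ = c / 2 := by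
      simp_rw [mul_div_assoc]
      rw [integral_const_mul]
      simp_rw [div_eq_mul_inv]
      rw [integral_mul_const, hμ.2.2.1, one_mul]
    rw [h1, h2, h3, add_zero]
  rw [key τ hτ, key ρ hρ]
  have habs : ∀ (μ : Measure ℝ), MemMs s μ → |∫ x, R x ∂μ| ≤ ∫ x, |x| ^ s ∂μ := by
    intro μ hμ
    have h0 : |∫ x, R x ∂μ| ≤ ∫ x, |R x| ∂μ := by
      simpa [Real.norm_eq_abs] using norm_integral_le_integral_norm (μ := μ) R
    refine h0.trans ?_
    refine integral_mono (hμ.integrable_of_F hs hf).abs hμ.2.2.2 fun x => ?_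
    exact taylor_bound hs hf x
  have h1 := habs τ hτ
  have h2 := habs ρ hρ
  have := abs_sub (∫ x, R x ∂τ) (∫ x, R x ∂ρ)
  calc |(f 0 + c / 2 + ∫ x, R x ∂τ) - (f 0 + c / 2 + ∫ x, R x ∂ρ)|
      = |(∫ x, R x ∂τ) - ∫ x, R x ∂ρ| := by congr 1; ring
    _ ≤ |∫ x, R x ∂τ| + |∫ x, R x ∂ρ| := abs_sub _ _
    _ ≤ _ := add_le_add h1 h2

lemma zero_mem_F {s : ℝ} : (fun _ : ℝ => (0:ℝ)) ∈ zolotarevF s := by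
  constructor
  · exact contDiff_const
  · intro x y
    have : iteratedDeriv 2 (fun _ : ℝ => (0:ℝ)) = fun _ => 0 := by
      rw [iteratedDeriv_succ, iteratedDeriv_one]
      simp
    rw [this]
    simpa using Real.rpow_nonneg (abs_nonneg (x - y)) (s - 2)

lemma bddAbove_zset {s : ℝ} (hs : 2 < s) {τ ρ : Measure ℝ} (hτ : MemMs s τ) (hρ : MemMs s ρ) :
    BddAbove {r : ℝ | ∃ f ∈ zolotarevF s, r = |(∫ x, f x ∂τ) - ∫ x, f x ∂ρ|} := by
  refine ⟨(∫ x, |x| ^ s ∂τ) + ∫ x, |x| ^ s ∂ρ, ?_⟩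
  rintro r ⟨f, hf, rfl⟩
  exact abs_integral_sub_le hs hτ hρ hf

lemma le_zdist {s : ℝ} (hs : 2 < s) {τ ρ : Measure ℝ} (hτ : MemMs s τ) (hρ : MemMs s ρ)
    {f : ℝ → ℝ} (hf : f ∈ zolotarevF s) :
    |(∫ x, f x ∂τ) - ∫ x, f x ∂ρ| ≤ zolotarevDist s τ ρ :=
  le_csSup (bddAbove_zset hs hτ hρ) ⟨f, hf, rfl⟩

lemma zdist_nonneg {s : ℝ} (hs : 2 < s) {τ ρ : Measure ℝ} (hτ : MemMs s τ) (hρ : MemMs s ρ) :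
    0 ≤ zolotarevDist s τ ρ := by
  have := le_zdist hs hτ hρ (zero_mem_F (s := s))
  simpa using this.trans_eq' (by simp)

lemma scaled_mem {s : ℝ} (hs : 2 < s) {f : ℝ → ℝ} (hf : f ∈ zolotarevF s)
    {a : ℝ} (ha : 0 < a) (c : ℝ) :
    (fun x => f (a * x + c) / a ^ s) ∈ zolotarevF s := by
  obtain ⟨h1, h2, h3, _⟩ := deriv_facts hf.1
  have hl : ContDiff ℝ 2 (fun x : ℝ => a * x + c) :=
    ((contDiff_const.mul contDiff_id).add contDiff_const)
  have haff : ∀ x : ℝ, HasDerivAt (fun x : ℝ => a * x + c) a x := by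
    intro x
    simpa using ((hasDerivAt_id x).const_mul a).add_const c
  set g : ℝ → ℝ := fun x => f (a * x + c) / a ^ s with hg
  have hgc : ContDiff ℝ 2 g := (hf.1.comp hl).div_const _
  have hd1 : ∀ x, HasDerivAt g (deriv f (a * x + c) * a / a ^ s) x := by
    intro x
    exact (((h1 (a * x + c)).hasDerivAt.comp x (haff x))).div_const _
  have hderiv_g : deriv g = fun x => deriv f (a * x + c) * a / a ^ s := by
    funext x; exact (hd1 x).deriv
  have hd2 : ∀ x, HasDerivAt (deriv g) (iteratedDeriv 2 f (a * x + c) * a * (a / a ^ s)) x := by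
    intro x
    rw [hderiv_g]
    have hcomp : HasDerivAt (fun x => deriv f (a * x + c)) (iteratedDeriv 2 f (a * x + c) * a) x :=
      by have := (h3 (a * x + c)).comp x (haff x); exact this
    have := hcomp.mul_const (a / a ^ s)
    have he : (fun x => deriv f (a * x + c) * a / a ^ s) = fun y => deriv f (a * y + c) * (a / a ^ s) := by
      funext y; ring
    rw [he]; exact this
  have hi2g : iteratedDeriv 2 g = fun x => iteratedDeriv 2 f (a * x + c) * a * (a / a ^ s) := by
    rw [iteratedDeriv_succ, iteratedDeriv_one]
    funext x
    exact (hd2 x).deriv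
  refine ⟨hgc, ?_⟩
  intro x y
  rw [hi2g]
  have has : (0:ℝ) < a ^ s := Real.rpow_pos_of_pos ha s
  have key : a ^ (s - 2) * (a * (a / a ^ s)) = 1 := by
    have h2' : (a:ℝ) * a = a ^ ((2:ℕ):ℝ) := by
      rw [Real.rpow_natCast]; ring
    field_simp
    rw [← Real.rpow_natCast, ← Real.rpow_add ha]
    norm_num
  calc |iteratedDeriv 2 f (a * x + c) * a * (a / a ^ s) -
        iteratedDeriv 2 f (a * y + c) * a * (a / a ^ s)|
      = |iteratedDeriv 2 f (a * x + c) - iteratedDeriv 2 f (a * y + c)| * (a * (a / a ^ s)) := by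
        rw [show iteratedDeriv 2 f (a * x + c) * a * (a / a ^ s) -
            iteratedDeriv 2 f (a * y + c) * a * (a / a ^ s) =
            (iteratedDeriv 2 f (a * x + c) - iteratedDeriv 2 f (a * y + c)) * (a * (a / a ^ s))
          from by ring, abs_mul, abs_of_pos (mul_pos ha (div_pos ha has))]
    _ ≤ |a * x + c - (a * y + c)| ^ (s - 2) * (a * (a / a ^ s)) := by
        apply mul_le_mul_of_nonneg_right (hf.2 _ _)
        positivity
    _ = a ^ (s - 2) * |x - y| ^ (s - 2) * (a * (a / a ^ s)) := by
        have : a * x + c - (a * y + c) = a * (x - y) := by ring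
        rw [this, abs_mul, abs_of_pos ha, Real.mul_rpow ha.le (abs_nonneg _)]
    _ = |x - y| ^ (s - 2) := by
        rw [mul_comm (a ^ (s-2)), mul_assoc, key, mul_one]

lemma scaling_bound {s : ℝ} (hs : 2 < s) {τ ρ : Measure ℝ} (hτ : MemMs s τ) (hρ : MemMs s ρ)
    {f : ℝ → ℝ} (hf : f ∈ zolotarevF s) {a : ℝ} (ha : 0 < a) (c : ℝ) :
    |(∫ x, f (a * x + c) ∂τ) - ∫ x, f (a * x + c) ∂ρ| ≤ a ^ s * zolotarevDist s τ ρ := by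
  have has : (0:ℝ) < a ^ s := Real.rpow_pos_of_pos ha s
  have hmem := scaled_mem hs hf ha c
  have hle := le_zdist hs hτ hρ hmem
  have e1 : ∫ x, f (a * x + c) / a ^ s ∂τ = (∫ x, f (a * x + c) ∂τ) / a ^ s := integral_div _ _
  have e2 : ∫ x, f (a * x + c) / a ^ s ∂ρ = (∫ x, f (a * x + c) ∂ρ) / a ^ s := integral_div _ _
  rw [e1, e2, div_sub_div_same, abs_div, abs_of_pos has, div_le_iff₀ has] at hle
  calc |(∫ x, f (a * x + c) ∂τ) - ∫ x, f (a * x + c) ∂ρ|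
      ≤ zolotarevDist s τ ρ * a ^ s := hle
    _ = a ^ s * zolotarevDist s τ ρ := mul_comm _ _

lemma abs_le_one_add_rpow {s : ℝ} (hs : 1 ≤ s) (x : ℝ) : |x| ≤ 1 + |x| ^ s := by
  rcases le_or_gt (|x|) 1 with h | h
  · have := Real.rpow_nonneg (abs_nonneg x) s; linarith
  · have h3 : |x| ^ (1:ℝ) ≤ |x| ^ s := Real.rpow_le_rpow_of_exponent_le h.le hs
    rw [Real.rpow_one] at h3; linarith

lemma sq_le_one_add_rpow {s : ℝ} (hs : 2 ≤ s) (x : ℝ) : x ^ 2 ≤ 1 + |x| ^ s := by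
  rw [← sq_abs]
  rcases le_or_gt (|x|) 1 with h | h
  · have := Real.rpow_nonneg (abs_nonneg x) s
    have h2 : |x| ^ 2 ≤ 1 := pow_le_one₀ (abs_nonneg x) h
    linarith
  · have h3 : |x| ^ ((2:ℕ):ℝ) ≤ |x| ^ s :=
      Real.rpow_le_rpow_of_exponent_le h.le (by exact_mod_cast hs)
    rw [Real.rpow_natCast] at h3; linarith

lemma growth {s : ℝ} (hs : 2 < s) {f : ℝ → ℝ} (hf : f ∈ zolotarevF s) (w : ℝ) :
    |f w| ≤ (|f 0| + |deriv f 0| + |iteratedDeriv 2 f 0| / 2 + 1) * (1 + |w| ^ s) := by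
  have ht := taylor_bound hs hf w
  set c := iteratedDeriv 2 f 0
  have h1 := abs_le_one_add_rpow (by linarith : (1:ℝ) ≤ s) w
  have h2 := sq_le_one_add_rpow (by linarith : (2:ℝ) ≤ s) w
  have htri : |f w| ≤ |w| ^ s + |f 0| + |deriv f 0| * |w| + |c| * w ^ 2 / 2 := by
    have : f w = (f w - f 0 - deriv f 0 * w - c * w ^ 2 / 2) + f 0 + deriv f 0 * w
        + c * w ^ 2 / 2 := by ring
    rw [this]
    have t1 := abs_add_le (f w - f 0 - deriv f 0 * w - c * w ^ 2 / 2 + f 0 + deriv f 0 * w)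
      (c * w ^ 2 / 2)
    have t2 := abs_add_le (f w - f 0 - deriv f 0 * w - c * w ^ 2 / 2 + f 0) (deriv f 0 * w)
    have t3 := abs_add_le (f w - f 0 - deriv f 0 * w - c * w ^ 2 / 2) (f 0)
    have e1 : |deriv f 0 * w| = |deriv f 0| * |w| := abs_mul _ _
    have e2 : |c * w ^ 2 / 2| = |c| * w ^ 2 / 2 := by
      rw [abs_div, abs_mul, abs_pow, sq_abs]
      norm_num
    linarith
  have hw : 0 ≤ |w| := abs_nonneg w
  have hws : 0 ≤ |w| ^ s := Real.rpow_nonneg hw s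
  have hsq : 0 ≤ w ^ 2 := sq_nonneg w
  nlinarith [abs_nonneg (f 0), abs_nonneg (deriv f 0), abs_nonneg c]

lemma rpow_add_le {s u v : ℝ} (hs : 0 ≤ s) (hu : 0 ≤ u) (hv : 0 ≤ v) :
    (u + v) ^ s ≤ 2 ^ s * (u ^ s + v ^ s) := by
  have h1 : u + v ≤ 2 * max u v := by
    rcases le_total u v with h | h
    · rw [max_eq_right h]; linarith
    · rw [max_eq_left h]; linarith
  have h2 : (u + v) ^ s ≤ (2 * max u v) ^ s :=
    Real.rpow_le_rpow (by linarith) h1 hs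
  have h3 : (2 * max u v) ^ s = 2 ^ s * (max u v) ^ s :=
    Real.mul_rpow (by norm_num) (le_max_iff.2 (Or.inl hu))
  have h4 : (max u v) ^ s ≤ u ^ s + v ^ s := by
    rcases le_total u v with h | h
    · rw [max_eq_right h]
      have := Real.rpow_nonneg hu s; linarith
    · rw [max_eq_left h]
      have := Real.rpow_nonneg hv s; linarith
  calc (u + v) ^ s ≤ (2 * max u v) ^ s := h2
    _ = 2 ^ s * (max u v) ^ s := h3
    _ ≤ 2 ^ s * (u ^ s + v ^ s) := by
        apply mul_le_mul_of_nonneg_left h4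
        exact Real.rpow_nonneg (by norm_num) s

lemma prod_integrable {s : ℝ} (hs : 2 < s) {f : ℝ → ℝ} (hf : f ∈ zolotarevF s)
    {a b : ℝ} (ha : 0 < a) (hb : 0 < b) {μ ν : Measure ℝ} (hμ : MemMs s μ) (hν : MemMs s ν) :
    Integrable (fun z : ℝ × ℝ => f (a * z.1 + b * z.2)) (μ.prod ν) := by
  haveI := hμ.1; haveI := hν.1
  set K := |f 0| + |deriv f 0| + |iteratedDeriv 2 f 0| / 2 + 1 with hK
  have hK0 : 0 ≤ K := by
    have := abs_nonneg (f 0); have := abs_nonneg (deriv f 0)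
    have := abs_nonneg (iteratedDeriv 2 f 0); positivity
  have hmeas : AEStronglyMeasurable (fun z : ℝ × ℝ => f (a * z.1 + b * z.2)) (μ.prod ν) := by
    refine Continuous.aestronglyMeasurable ?_
    exact hf.1.continuous.comp
      ((continuous_const.mul continuous_fst).add (continuous_const.mul continuous_snd))
  have hint1 : Integrable (fun z : ℝ × ℝ => |z.1| ^ s) (μ.prod ν) := by
    have := hμ.2.2.2.mul_prod (integrable_const (1:ℝ) (μ := ν))
    simpa using this
  have hint2 : Integrable (fun z : ℝ × ℝ => |z.2| ^ s) (μ.prod ν) := by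
    have := (integrable_const (1:ℝ) (μ := μ)).mul_prod hν.2.2.2
    simpa using this
  have hD : Integrable (fun z : ℝ × ℝ =>
      K * (1 + 2 ^ s * (a ^ s * |z.1| ^ s + b ^ s * |z.2| ^ s))) (μ.prod ν) := by
    apply Integrable.const_mul
    refine (integrable_const 1).add (Integrable.const_mul ?_ _)
    exact (hint1.const_mul _).add (hint2.const_mul _)
  refine Integrable.mono' hD hmeas (Filter.Eventually.of_forall fun z => ?_)
  have hg := growth hs hf (a * z.1 + b * z.2)
  have hkey : |a * z.1 + b * z.2| ^ s ≤ 2 ^ s * (a ^ s * |z.1| ^ s + b ^ s * |z.2| ^ s) := by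
    have h1 : |a * z.1 + b * z.2| ≤ |a * z.1| + |b * z.2| := abs_add_le _ _
    have h2 : |a * z.1 + b * z.2| ^ s ≤ (|a * z.1| + |b * z.2|) ^ s :=
      Real.rpow_le_rpow (abs_nonneg _) h1 (by linarith)
    have h3 := rpow_add_le (by linarith : (0:ℝ) ≤ s) (abs_nonneg (a * z.1)) (abs_nonneg (b * z.2))
    have e1 : |a * z.1| ^ s = a ^ s * |z.1| ^ s := by
      rw [abs_mul, abs_of_pos ha, Real.mul_rpow ha.le (abs_nonneg _)]
    have e2 : |b * z.2| ^ s = b ^ s * |z.2| ^ s := by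
      rw [abs_mul, abs_of_pos hb, Real.mul_rpow hb.le (abs_nonneg _)]
    rw [e1, e2] at h3
    linarith
  have h2s : (0:ℝ) ≤ 2 ^ s * (a ^ s * |z.1| ^ s + b ^ s * |z.2| ^ s) := by
    have := Real.rpow_nonneg (abs_nonneg z.1) s
    have := Real.rpow_nonneg (abs_nonneg z.2) s
    have := Real.rpow_nonneg ha.le s
    have := Real.rpow_nonneg hb.le s
    have : (0:ℝ) ≤ (2:ℝ) ^ s := Real.rpow_nonneg (by norm_num) s
    positivity
  simp only [Real.norm_eq_abs]
  calc |f (a * z.1 + b * z.2)| ≤ K * (1 + |a * z.1 + b * z.2| ^ s) := hg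
    _ ≤ K * (1 + 2 ^ s * (a ^ s * |z.1| ^ s + b ^ s * |z.2| ^ s)) := by
        apply mul_le_mul_of_nonneg_left _ hK0
        linarith

lemma L5 {s : ℝ} (hs : 2 < s) {f : ℝ → ℝ} (hf : f ∈ zolotarevF s)
    {a b : ℝ} (ha : 0 < a) (hb : 0 < b)
    {τ0 τ1 ρ0 ρ1 : Measure ℝ} (hτ0 : MemMs s τ0) (hτ1 : MemMs s τ1)
    (hρ0 : MemMs s ρ0) (hρ1 : MemMs s ρ1) :
    |(∫ z : ℝ × ℝ, f (a * z.1 + b * z.2) ∂(τ0.prod τ1)) -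
      ∫ z : ℝ × ℝ, f (a * z.1 + b * z.2) ∂(ρ0.prod ρ1)| ≤
      a ^ s * zolotarevDist s τ0 ρ0 + b ^ s * zolotarevDist s τ1 ρ1 := by
  haveI := hτ0.1; haveI := hτ1.1; haveI := hρ0.1; haveI := hρ1.1
  have hIττ := prod_integrable hs hf ha hb hτ0 hτ1
  have hIρτ := prod_integrable hs hf ha hb hρ0 hτ1
  have hIρρ := prod_integrable hs hf ha hb hρ0 hρ1
  -- inner integral functions
  set φ : ℝ → ℝ := fun y => ∫ x, f (a * x + b * y) ∂τ0 with hφdef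
  set ψ : ℝ → ℝ := fun y => ∫ x, f (a * x + b * y) ∂ρ0 with hψdef
  set φ' : ℝ → ℝ := fun x => ∫ y, f (a * x + b * y) ∂τ1 with hφ'def
  set ψ' : ℝ → ℝ := fun x => ∫ y, f (a * x + b * y) ∂ρ1 with hψ'def
  -- swap representations
  have swapττ : (∫ z : ℝ × ℝ, f (a * z.1 + b * z.2) ∂(τ0.prod τ1)) = ∫ y, φ y ∂τ1 := by
    rw [MeasureTheory.integral_prod _ hIττ]
    exact MeasureTheory.integral_integral_swap (f := fun x y => f (a * x + b * y)) hIττ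
  have swapρτ : (∫ z : ℝ × ℝ, f (a * z.1 + b * z.2) ∂(ρ0.prod τ1)) = ∫ y, ψ y ∂τ1 := by
    rw [MeasureTheory.integral_prod _ hIρτ]
    exact MeasureTheory.integral_integral_swap (f := fun x y => f (a * x + b * y)) hIρτ
  have prodρτ : (∫ z : ℝ × ℝ, f (a * z.1 + b * z.2) ∂(ρ0.prod τ1)) = ∫ x, φ' x ∂ρ0 :=
    MeasureTheory.integral_prod _ hIρτ
  have prodρρ : (∫ z : ℝ × ℝ, f (a * z.1 + b * z.2) ∂(ρ0.prod ρ1)) = ∫ x, ψ' x ∂ρ0 :=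
    MeasureTheory.integral_prod _ hIρρ
  -- integrability of inner integrals
  have hφint : Integrable φ τ1 := by
    have := hIττ.swap.integral_prod_left
    exact this
  have hψint : Integrable ψ τ1 := by
    have := hIρτ.swap.integral_prod_left
    exact this
  have hφ'int : Integrable φ' ρ0 := hIρτ.integral_prod_left
  have hψ'int : Integrable ψ' ρ0 := hIρρ.integral_prod_left
  -- pointwise bounds
  have hbA : ∀ y : ℝ, |φ y - ψ y| ≤ a ^ s * zolotarevDist s τ0 ρ0 := fun y =>
    scaling_bound hs hτ0 hρ0 hf ha (b * y)
  have hbB : ∀ x : ℝ, |φ' x - ψ' x| ≤ b ^ s * zolotarevDist s τ1 ρ1 := by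
    intro x
    have he : (fun y => f (a * x + b * y)) = fun y => f (b * y + a * x) := by
      funext y; rw [add_comm]
    have := scaling_bound hs hτ1 hρ1 hf hb (a * x)
    simp only [hφ'def, hψ'def, he]
    exact this
  -- term A
  have termA : |(∫ y, φ y ∂τ1) - ∫ y, ψ y ∂τ1| ≤ a ^ s * zolotarevDist s τ0 ρ0 := by
    rw [← integral_sub hφint hψint]
    calc |∫ y, (φ y - ψ y) ∂τ1| ≤ ∫ y, |φ y - ψ y| ∂τ1 := by
          simpa [Real.norm_eq_abs] using norm_integral_le_integral_norm (μ := τ1) fun y => φ y - ψ y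
      _ ≤ ∫ _y, a ^ s * zolotarevDist s τ0 ρ0 ∂τ1 :=
          integral_mono (hφint.sub hψint).abs (integrable_const _) hbA
      _ = a ^ s * zolotarevDist s τ0 ρ0 := by simp
  -- term B
  have termB : |(∫ x, φ' x ∂ρ0) - ∫ x, ψ' x ∂ρ0| ≤ b ^ s * zolotarevDist s τ1 ρ1 := by
    rw [← integral_sub hφ'int hψ'int]
    calc |∫ x, (φ' x - ψ' x) ∂ρ0| ≤ ∫ x, |φ' x - ψ' x| ∂ρ0 := by
          simpa [Real.norm_eq_abs] using
            norm_integral_le_integral_norm (μ := ρ0) fun x => φ' x - ψ' x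
      _ ≤ ∫ _x, b ^ s * zolotarevDist s τ1 ρ1 ∂ρ0 :=
          integral_mono (hφ'int.sub hψ'int).abs (integrable_const _) hbB
      _ = b ^ s * zolotarevDist s τ1 ρ1 := by simp
  calc |(∫ z : ℝ × ℝ, f (a * z.1 + b * z.2) ∂(τ0.prod τ1)) -
        ∫ z : ℝ × ℝ, f (a * z.1 + b * z.2) ∂(ρ0.prod ρ1)|
      ≤ |(∫ z : ℝ × ℝ, f (a * z.1 + b * z.2) ∂(τ0.prod τ1)) -
          ∫ z : ℝ × ℝ, f (a * z.1 + b * z.2) ∂(ρ0.prod τ1)| +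
        |(∫ z : ℝ × ℝ, f (a * z.1 + b * z.2) ∂(ρ0.prod τ1)) -
          ∫ z : ℝ × ℝ, f (a * z.1 + b * z.2) ∂(ρ0.prod ρ1)| := abs_sub_le _ _ _
    _ ≤ a ^ s * zolotarevDist s τ0 ρ0 + b ^ s * zolotarevDist s τ1 ρ1 := by
        rw [swapττ, swapρτ, prodρτ, prodρρ] at *
        exact add_le_add termA termB

lemma comp_bound {s : ℝ} (hs : 2 < s) {a b : ℝ} (ha : 0 < a) (hb : 0 < b)
    {τ0 τ1 ρ0 ρ1 : Measure ℝ} (hτ0 : MemMs s τ0) (hτ1 : MemMs s τ1)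
    (hρ0 : MemMs s ρ0) (hρ1 : MemMs s ρ1) :
    zolotarevDist s ((τ0.prod τ1).map (fun z : ℝ × ℝ => a * z.1 + b * z.2))
      ((ρ0.prod ρ1).map (fun z : ℝ × ℝ => a * z.1 + b * z.2)) ≤
      a ^ s * zolotarevDist s τ0 ρ0 + b ^ s * zolotarevDist s τ1 ρ1 := by
  haveI := hτ0.1; haveI := hτ1.1; haveI := hρ0.1; haveI := hρ1.1
  have hg : Measurable (fun z : ℝ × ℝ => a * z.1 + b * z.2) :=
    ((measurable_fst.const_mul a).add (measurable_snd.const_mul b))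
  apply Real.sSup_le
  · rintro r ⟨f, hf, rfl⟩
    rw [integral_map hg.aemeasurable hf.1.continuous.aestronglyMeasurable,
      integral_map hg.aemeasurable hf.1.continuous.aestronglyMeasurable]
    exact L5 hs hf ha hb hτ0 hτ1 hρ0 hρ1
  · have h0 := zdist_nonneg hs hτ0 hρ0
    have h1 := zdist_nonneg hs hτ1 hρ1
    have ha' := Real.rpow_nonneg ha.le s
    have hb' := Real.rpow_nonneg hb.le s
    positivity

lemma sqrt_rpow_helper {p s : ℝ} (hp : 0 ≤ p) : Real.sqrt p ^ s = p ^ (s / 2) := by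
  rw [Real.sqrt_eq_rpow, ← Real.rpow_mul hp]
  ring_nf

/-- inequality (22), contraction property of `T`:
for `s ∈ (2,3]` and `p_{00}, p_{11} ∈ (0,1)`, with
`ξ = max_i (p_{ii}^{s/2} + (1-p_{ii})^{s/2})` one has `ξ < 1` and
`ζ_s^∨(T(τ_0,τ_1), T(ρ_0,ρ_1)) ≤ ξ ζ_s^∨((τ_0,τ_1),(ρ_0,ρ_1))` on `M²`. -/
theorem Tmap_contraction
    (s : ℝ) (hs : s ∈ Set.Ioc (2 : ℝ) 3)
    (p00 p11 : ℝ) (hp00 : p00 ∈ Set.Ioo (0 : ℝ) 1) (hp11 : p11 ∈ Set.Ioo (0 : ℝ) 1)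
    (ξ : ℝ)
    (hξ : ξ = max (p00 ^ (s / 2) + (1 - p00) ^ (s / 2))
                  (p11 ^ (s / 2) + (1 - p11) ^ (s / 2))) :
    ξ < 1 ∧
    ∀ τ ρ : Measure ℝ × Measure ℝ,
      MemMs s τ.1 → MemMs s τ.2 → MemMs s ρ.1 → MemMs s ρ.2 →
      zolotarevDistMax s (Tmap p00 p11 τ) (Tmap p00 p11 ρ) ≤ ξ * zolotarevDistMax s τ ρ := by
  obtain ⟨hs2, hs3⟩ := hs
  have hxi : ∀ p : ℝ, p ∈ Set.Ioo (0:ℝ) 1 → p ^ (s/2) + (1-p) ^ (s/2) < 1 := by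
    intro p hp
    have h1 : p ^ (s/2) < p ^ (1:ℝ) := Real.rpow_lt_rpow_of_exponent_gt hp.1 hp.2 (by linarith)
    have h2 : (1-p) ^ (s/2) < (1-p) ^ (1:ℝ) :=
      Real.rpow_lt_rpow_of_exponent_gt (by linarith [hp.2]) (by linarith [hp.1]) (by linarith)
    rw [Real.rpow_one] at h1 h2
    linarith
  constructor
  · rw [hξ]
    exact max_lt (hxi p00 hp00) (hxi p11 hp11)
  intro τ ρ h1 h2 h3 h4
  have hzmax0 : 0 ≤ zolotarevDistMax s τ ρ :=
    le_trans (zdist_nonneg hs2 h1 h3) (le_max_left _ _)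
  have hz0le : zolotarevDist s τ.1 ρ.1 ≤ zolotarevDistMax s τ ρ := le_max_left _ _
  have hz1le : zolotarevDist s τ.2 ρ.2 ≤ zolotarevDistMax s τ ρ := le_max_right _ _
  have hξ0 : 0 ≤ ξ := by
    rw [hξ]
    have := Real.rpow_nonneg hp00.1.le (s/2)
    have := Real.rpow_nonneg (by linarith [hp00.2] : (0:ℝ) ≤ 1 - p00) (s/2)
    exact le_trans (by linarith) (le_max_left _ _)
  have key : ∀ (a b : ℝ), 0 < a → 0 < b → a ^ s + b ^ s ≤ ξ →
      zolotarevDist s ((τ.1.prod τ.2).map (fun z : ℝ × ℝ => a * z.1 + b * z.2))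
        ((ρ.1.prod ρ.2).map (fun z : ℝ × ℝ => a * z.1 + b * z.2)) ≤
        ξ * zolotarevDistMax s τ ρ := by
    intro a b ha hb hab
    refine (comp_bound hs2 ha hb h1 h2 h3 h4).trans ?_
    have hA := Real.rpow_nonneg ha.le s
    have hB := Real.rpow_nonneg hb.le s
    calc a ^ s * zolotarevDist s τ.1 ρ.1 + b ^ s * zolotarevDist s τ.2 ρ.2
        ≤ a ^ s * zolotarevDistMax s τ ρ + b ^ s * zolotarevDistMax s τ ρ :=
          add_le_add (mul_le_mul_of_nonneg_left hz0le hA) (mul_le_mul_of_nonneg_left hz1le hB)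
      _ = (a ^ s + b ^ s) * zolotarevDistMax s τ ρ := by ring
      _ ≤ ξ * zolotarevDistMax s τ ρ := mul_le_mul_of_nonneg_right hab hzmax0
  have h00a : (0:ℝ) < Real.sqrt p00 := Real.sqrt_pos.2 hp00.1
  have h00b : (0:ℝ) < Real.sqrt (1 - p00) := Real.sqrt_pos.2 (by linarith [hp00.2])
  have h11a : (0:ℝ) < Real.sqrt (1 - p11) := Real.sqrt_pos.2 (by linarith [hp11.2])
  have h11b : (0:ℝ) < Real.sqrt p11 := Real.sqrt_pos.2 hp11.1
  have e00 : Real.sqrt p00 ^ s + Real.sqrt (1 - p00) ^ s ≤ ξ := by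
    rw [sqrt_rpow_helper hp00.1.le, sqrt_rpow_helper (by linarith [hp00.2] : (0:ℝ) ≤ 1 - p00), hξ]
    exact le_max_left _ _
  have e11 : Real.sqrt (1 - p11) ^ s + Real.sqrt p11 ^ s ≤ ξ := by
    rw [sqrt_rpow_helper hp11.1.le, sqrt_rpow_helper (by linarith [hp11.2] : (0:ℝ) ≤ 1 - p11), hξ]
    rw [add_comm]
    exact le_max_right _ _
  rw [zolotarevDistMax]
  apply max_le
  · exact key _ _ h00a h00b e00
  · exact key _ _ h11a h11b e11
end
end
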